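/- arXiv:2312.11801 — 5 statements merged into one kernel-verified Lean document; each statement's English description precedes it below -/
import Mathlib

section
/- Fix ρ > 0, y_t ∈ ℝᵐ, and X ∈ Sⁿ. Let ν = proj_N(b − 𝒜X − ρ·y_t) and ỹ = y_t − (1/ρ)(b − ν − 𝒜X). Then: (i) ỹ ∈ Y, and in fact ỹᵢ = max{(y_t)ᵢ − (1/ρ)(b − 𝒜X)ᵢ, 0} for every i ∈ I; (ii) ⟨ỹ, ν⟩ = 0; and (iii) ỹ = proj_Y(y_t − (1/ρ)(b − 𝒜X)). -/
open Matrix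
open scoped RealInnerProductSpace

noncomputable def Aop {n m : ℕ} (A : Fin m → Matrix (Fin n) (Fin n) ℝ)
    (X : Matrix (Fin n) (Fin n) ℝ) : EuclideanSpace ℝ (Fin m) :=
  WithLp.toLp 2 (fun i => (A i * X).trace)

def Yset {m : ℕ} (I : Finset (Fin m)) : Set (EuclideanSpace ℝ (Fin m)) :=
  {y | ∀ i ∈ I, 0 ≤ y i}

/-- Euclidean projection onto `N`: `proj_N(z)ᵢ = max{zᵢ, 0}` for `i ∈ I`, `0` for `i ∉ I`. -/
noncomputable def projN {m : ℕ} (I : Finset (Fin m)) (z : EuclideanSpace ℝ (Fin m)) :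
    EuclideanSpace ℝ (Fin m) :=
  WithLp.toLp 2 (fun i => if i ∈ I then max (z i) 0 else 0)

/-- Euclidean projection onto `Y`: `proj_Y(z)ᵢ = max{zᵢ, 0}` for `i ∈ I`, `zᵢ` for `i ∉ I`. -/
noncomputable def projY {m : ℕ} (I : Finset (Fin m)) (z : EuclideanSpace ℝ (Fin m)) :
    EuclideanSpace ℝ (Fin m) :=
  WithLp.toLp 2 (fun i => if i ∈ I then max (z i) 0 else z i)

/-- With `ν = proj_N(b − 𝒜X − ρ·y_t)` and `ỹ = y_t − (1/ρ)(b − ν − 𝒜X)`: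
(i) `ỹ ∈ Y` and `ỹᵢ = max{(y_t)ᵢ − (1/ρ)(b − 𝒜X)ᵢ, 0}` for every `i ∈ I`;
(ii) `⟨ỹ, ν⟩ = 0`; (iii) `ỹ = proj_Y(y_t − (1/ρ)(b − 𝒜X))`. -/
theorem stmt4 {n m : ℕ} (A : Fin m → Matrix (Fin n) (Fin n) ℝ)
    (b : EuclideanSpace ℝ (Fin m)) (I : Finset (Fin m))
    (ρ : ℝ) (hρ : 0 < ρ) (yt : EuclideanSpace ℝ (Fin m))
    (X : Matrix (Fin n) (Fin n) ℝ)
    (ν ytilde : EuclideanSpace ℝ (Fin m))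
    (hν : ν = projN I (b - Aop A X - ρ • yt))
    (hyt : ytilde = yt - (1 / ρ) • (b - ν - Aop A X)) :
    ytilde ∈ Yset I ∧
    (∀ i ∈ I, ytilde i = max (yt i - (1 / ρ) * (b i - Aop A X i)) 0) ∧
    ⟪ytilde, ν⟫ = 0 ∧
    ytilde = projY I (yt - (1 / ρ) • (b - Aop A X)) := by
  have hiff1 : ∀ c y : ℝ, (1/ρ)*c ≤ y ↔ c ≤ y*ρ := fun c y => by
    rw [one_div, inv_mul_eq_div, div_le_iff₀ hρ]
  have hiff2 : ∀ c y : ℝ, y ≤ (1/ρ)*c ↔ y*ρ ≤ c := fun c y => by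
    rw [one_div, inv_mul_eq_div, le_div_iff₀ hρ]
  have key : ∀ i, ytilde i = if i ∈ I then max (yt i - (1 / ρ) * (b i - Aop A X i)) 0
      else yt i - (1 / ρ) * (b i - Aop A X i) := by
    intro i
    have hνi : ν i = if i ∈ I then max (b i - Aop A X i - ρ * yt i) 0 else 0 := by
      rw [hν]; simp [projN, PiLp.sub_apply, PiLp.smul_apply, smul_eq_mul]
    have : ytilde i = yt i - (1 / ρ) * (b i - ν i - Aop A X i) := by
      rw [hyt]; simp [PiLp.sub_apply, PiLp.smul_apply, smul_eq_mul]
    rw [this, hνi]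
    by_cases h : i ∈ I
    · simp only [h, if_pos]
      rcases le_total (b i - Aop A X i - ρ * yt i) 0 with hc | hc
      · rw [max_eq_right hc, max_eq_left]
        · ring
        · linarith [(hiff1 (b i - Aop A X i) (yt i)).mpr (by linarith)]
      · rw [max_eq_left hc, max_eq_right]
        · field_simp; ring
        · linarith [(hiff2 (b i - Aop A X i) (yt i)).mpr (by linarith)]
    · simp only [h, if_neg, if_false]; ring
  have hnu : ∀ i, ν i = if i ∈ I then max (b i - Aop A X i - ρ * yt i) 0 else 0 := by
    intro i
    rw [hν]; simp [projN, PiLp.sub_apply, PiLp.smul_apply, smul_eq_mul]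
  refine ⟨?_, ?_, ?_, ?_⟩
  · intro i hi
    rw [key i]; simp [hi]
  · intro i hi
    rw [key i]; simp [hi]
  · rw [PiLp.inner_apply]
    apply Finset.sum_eq_zero
    intro i _
    rw [key i, hnu i]
    by_cases h : i ∈ I
    · simp only [h, if_pos, RCLike.inner_apply, conj_trivial]
      rcases le_total (b i - Aop A X i - ρ * yt i) 0 with hc | hc
      · rw [max_eq_right hc]; ring
      · rw [max_eq_left hc, max_eq_right]
        · ring
        · linarith [(hiff2 (b i - Aop A X i) (yt i)).mpr (by linarith)]
    · simp [h]
  · ext i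
    rw [key i]
    simp [projY, PiLp.sub_apply, PiLp.smul_apply, smul_eq_mul]
end

section
/- Let ỹ ∈ Y. Set v to be a unit-norm maximum eigenvector of C − 𝒜*ỹ if λmax(C − 𝒜*ỹ) > 0 and v = 0 otherwise, and let g = b − α·𝒜(vvᵀ). Let X̄ ∈ Sⁿ with X̄ ⪰ 0 and let V ∈ ℝ^{n×k} have orthonormal columns such that v lies in the column span of V. Define X̂ = {η·X̄ + V S Vᵀ : η ≥ 0, S ⪰ 0, η·tr(X̄) + tr(S) ≤ α} and f̂(y) = sup over (X,ν) ∈ X̂ × N of ⟨C − 𝒜*y, X⟩ + ⟨b − ν, y⟩. Then f̂(y) ≥ f(ỹ) + ⟨g, y − ỹ⟩ for all y ∈ ℝᵐ. -/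
open Matrix
open scoped RealInnerProductSpace

noncomputable def lambdaMax {n : ℕ} (M : Matrix (Fin n) (Fin n) ℝ) : ℝ :=
  if hM : M.IsHermitian then ⨆ i, hM.eigenvalues i else 0

noncomputable def Aadj {n m : ℕ} (A : Fin m → Matrix (Fin n) (Fin n) ℝ)
    (y : EuclideanSpace ℝ (Fin m)) : Matrix (Fin n) (Fin n) ℝ :=
  ∑ i, y i • A i

def Nset {m : ℕ} (I : Finset (Fin m)) : Set (EuclideanSpace ℝ (Fin m)) :=
  {ν | (∀ i ∈ I, 0 ≤ ν i) ∧ ∀ i ∉ I, ν i = 0}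

open Classical in
noncomputable def fpen {n m : ℕ} (C : Matrix (Fin n) (Fin n) ℝ)
    (A : Fin m → Matrix (Fin n) (Fin n) ℝ) (b : EuclideanSpace ℝ (Fin m))
    (I : Finset (Fin m)) (α : ℝ) (y : EuclideanSpace ℝ (Fin m)) : EReal :=
  if y ∈ Yset I then
    ((α * max (lambdaMax (C - Aadj A y)) 0 + ⟪b, y⟫ : ℝ) : EReal)
  else ⊤

def SpecSet {n k : ℕ} (α : ℝ) (Xb : Matrix (Fin n) (Fin n) ℝ)
    (V : Matrix (Fin n) (Fin k) ℝ) : Set (Matrix (Fin n) (Fin n) ℝ) :=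
  {X | ∃ η : ℝ, ∃ S : Matrix (Fin k) (Fin k) ℝ,
      0 ≤ η ∧ S.PosSemidef ∧ η * Xb.trace + S.trace ≤ α ∧ X = η • Xb + V * S * Vᵀ}

noncomputable def modelF {n m k : ℕ} (C : Matrix (Fin n) (Fin n) ℝ)
    (A : Fin m → Matrix (Fin n) (Fin n) ℝ) (b : EuclideanSpace ℝ (Fin m))
    (I : Finset (Fin m)) (α : ℝ) (Xb : Matrix (Fin n) (Fin n) ℝ)
    (V : Matrix (Fin n) (Fin k) ℝ) (y : EuclideanSpace ℝ (Fin m)) : EReal :=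
  sSup {r : EReal | ∃ X ∈ SpecSet α Xb V, ∃ ν ∈ Nset I,
    r = ((((C - Aadj A y) * X).trace + ⟪b - ν, y⟫ : ℝ) : EReal)}


lemma aux_trace_vmv {n : ℕ} (M : Matrix (Fin n) (Fin n) ℝ) (v : Fin n → ℝ) :
    (M * vecMulVec v v).trace = v ⬝ᵥ M.mulVec v := by
  simp only [Matrix.trace, Matrix.diag, Matrix.mul_apply, vecMulVec_apply, Matrix.mulVec,
    dotProduct, Finset.mul_sum]
  refine Finset.sum_congr rfl fun i _ => Finset.sum_congr rfl fun j _ => by ring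

lemma aux_conj {n k : ℕ} (V : Matrix (Fin n) (Fin k) ℝ) (w : Fin k → ℝ) :
    V * vecMulVec w w * Vᵀ = vecMulVec (V.mulVec w) (V.mulVec w) := by
  ext i j
  simp only [Matrix.mul_apply, vecMulVec_apply, Matrix.mulVec, dotProduct, Finset.sum_mul,
    Finset.mul_sum, transpose_apply]
  refine Finset.sum_congr rfl fun a _ => Finset.sum_congr rfl fun c _ => by ring

lemma aux_psd {k : ℕ} (w : Fin k → ℝ) (α : ℝ) (hα : 0 ≤ α) :
    (α • vecMulVec w w).PosSemidef := by
  rw [posSemidef_iff_dotProduct_mulVec]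
  constructor
  · ext i j
    simp only [conjTranspose_apply, Matrix.smul_apply, vecMulVec_apply, star_trivial, smul_eq_mul]
    ring
  · intro x
    have hs : star x = x := by ext i; simp
    rw [hs]
    have h1 : x ⬝ᵥ (α • vecMulVec w w) *ᵥ x = α * (x ⬝ᵥ w)^2 := by
      simp only [sq, dotProduct, Finset.mul_sum, Finset.sum_mul, Matrix.mulVec,
        vecMulVec_apply, Matrix.smul_apply, smul_eq_mul]
      refine Finset.sum_congr rfl fun a _ => Finset.sum_congr rfl fun i _ => by ring
    rw [h1]; positivity

lemma aux_trace_vv {k : ℕ} (w : Fin k → ℝ) : (vecMulVec w w).trace = w ⬝ᵥ w := by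
  simp [Matrix.trace, Matrix.diag, vecMulVec_apply, dotProduct]

lemma aux_trace_sub {n m : ℕ} (C : Matrix (Fin n) (Fin n) ℝ)
    (A : Fin m → Matrix (Fin n) (Fin n) ℝ) (z : EuclideanSpace ℝ (Fin m))
    (X : Matrix (Fin n) (Fin n) ℝ) :
    ((C - Aadj A z) * X).trace = (C * X).trace - ∑ i, z i * (A i * X).trace := by
  rw [Matrix.sub_mul, Matrix.trace_sub]
  congr 1
  rw [Aadj, Finset.sum_mul, Matrix.trace_sum]
  refine Finset.sum_congr rfl fun i _ => by rw [Matrix.smul_mul, Matrix.trace_smul, smul_eq_mul]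

lemma key_sum {m : ℕ} (b y yt t : Fin m → ℝ) (c : ℝ) :
    (c - ∑ i, yt i * t i) + (∑ i, b i * yt i) + ∑ i, (b i - t i) * (y i - yt i)
      = (c - ∑ i, y i * t i) + ∑ i, b i * y i := by
  have h : ∑ i, (b i - t i) * (y i - yt i)
      = ((∑ i, b i * y i) - ∑ i, b i * yt i) - ((∑ i, y i * t i) - ∑ i, yt i * t i) := by
    rw [← Finset.sum_sub_distrib, ← Finset.sum_sub_distrib, ← Finset.sum_sub_distrib]
    exact Finset.sum_congr rfl fun i _ => by ring
  rw [h]; ring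

lemma key_identity {n m : ℕ}
    (C : Matrix (Fin n) (Fin n) ℝ) (A : Fin m → Matrix (Fin n) (Fin n) ℝ)
    (b : EuclideanSpace ℝ (Fin m)) (α : ℝ)
    (ytilde : EuclideanSpace ℝ (Fin m))
    (v : Fin n → ℝ) (y : EuclideanSpace ℝ (Fin m))
    (g : EuclideanSpace ℝ (Fin m)) (hg : g = b - α • Aop A (vecMulVec v v)) :
    α * (v ⬝ᵥ (C - Aadj A ytilde) *ᵥ v) + ⟪b, ytilde⟫ + ⟪g, y - ytilde⟫
      = ((C - Aadj A y) * (α • vecMulVec v v)).trace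
          + ⟪b - (0 : EuclideanSpace ℝ (Fin m)), y⟫ := by
  have htr : ∀ B : Matrix (Fin n) (Fin n) ℝ,
      (B * (α • vecMulVec v v)).trace = α * (v ⬝ᵥ B *ᵥ v) := by
    intro B
    rw [Matrix.mul_smul, Matrix.trace_smul, smul_eq_mul, aux_trace_vmv]
  rw [hg, sub_zero, aux_trace_sub]
  simp only [htr]
  simp only [PiLp.inner_apply, RCLike.inner_apply, conj_trivial, PiLp.sub_apply,
    PiLp.smul_apply, smul_eq_mul, Aop, aux_trace_vmv]
  have hL : α * (v ⬝ᵥ (C - Aadj A ytilde) *ᵥ v)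
      = α * (v ⬝ᵥ C *ᵥ v) - ∑ i, ytilde i * (α * (v ⬝ᵥ A i *ᵥ v)) := by
    rw [← htr (C - Aadj A ytilde), aux_trace_sub]
    simp only [htr]
  rw [hL]
  have hk := key_sum (fun i => b i) (fun i => y i) (fun i => ytilde i)
      (fun i => α * (v ⬝ᵥ A i *ᵥ v)) (α * (v ⬝ᵥ C *ᵥ v))
  simp only [mul_comm] at hk ⊢
  exact hk

/-- subgradient lower bound for the spectral bundle model.  With `ỹ ∈ Y`, `v` a
unit-norm maximum eigenvector of `C − 𝒜*ỹ` (or `v = 0` if `λmax ≤ 0`),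
`g = b − α·𝒜(vvᵀ)`, `X̄ ⪰ 0`, and `V` with orthonormal columns whose span contains `v`,
the model satisfies `f̂(y) ≥ f(ỹ) + ⟨g, y − ỹ⟩` for all `y`. -/
theorem stmt9 {n m k : ℕ} (hn : 0 < n) (hm : 0 < m) (hk : 0 < k)
    (C : Matrix (Fin n) (Fin n) ℝ) (A : Fin m → Matrix (Fin n) (Fin n) ℝ)
    (b : EuclideanSpace ℝ (Fin m)) (I : Finset (Fin m)) (α : ℝ) (hα : 0 < α)
    (ytilde : EuclideanSpace ℝ (Fin m)) (hytilde : ytilde ∈ Yset I)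
    (v : Fin n → ℝ)
    (hv : (0 < lambdaMax (C - Aadj A ytilde) →
            v ⬝ᵥ v = 1 ∧
            (C - Aadj A ytilde).mulVec v = lambdaMax (C - Aadj A ytilde) • v) ∧
          (lambdaMax (C - Aadj A ytilde) ≤ 0 → v = 0))
    (g : EuclideanSpace ℝ (Fin m)) (hg : g = b - α • Aop A (vecMulVec v v))
    (Xb : Matrix (Fin n) (Fin n) ℝ) (hXb : Xb.PosSemidef)
    (V : Matrix (Fin n) (Fin k) ℝ) (hV : Vᵀ * V = 1)
    (hspan : ∃ w : Fin k → ℝ, V.mulVec w = v) :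
    ∀ y : EuclideanSpace ℝ (Fin m),
      fpen C A b I α ytilde + ((⟪g, y - ytilde⟫ : ℝ) : EReal)
        ≤ modelF C A b I α Xb V y := by
  intro y
  obtain ⟨w, hw⟩ := hspan
  have hvv : v ⬝ᵥ v ≤ 1 := by
    rcases lt_or_ge 0 (lambdaMax (C - Aadj A ytilde)) with h | h
    · exact le_of_eq (hv.1 h).1
    · simp [hv.2 h]
  have hmax : max (lambdaMax (C - Aadj A ytilde)) 0
      = v ⬝ᵥ (C - Aadj A ytilde) *ᵥ v := by
    rcases lt_or_ge 0 (lambdaMax (C - Aadj A ytilde)) with h | h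
    · obtain ⟨h1, h2⟩ := hv.1 h
      rw [h2, dotProduct_smul, smul_eq_mul, h1, mul_one, max_eq_left h.le]
    · simp [hv.2 h, max_eq_right h]
  have hww : w ⬝ᵥ w = v ⬝ᵥ v := by
    rw [← hw, dotProduct_mulVec, ← Matrix.mulVec_transpose, Matrix.mulVec_mulVec, hV,
      Matrix.one_mulVec]
  have hXmem : (α • vecMulVec v v) ∈ SpecSet α Xb V := by
    refine ⟨0, α • vecMulVec w w, le_refl 0, aux_psd w α hα.le, ?_, ?_⟩
    · rw [Matrix.trace_smul, smul_eq_mul, aux_trace_vv, hww]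
      nlinarith [hα.le, hvv]
    · rw [zero_smul, zero_add, Matrix.mul_smul, Matrix.smul_mul, aux_conj, hw]
  have h0N : (0 : EuclideanSpace ℝ (Fin m)) ∈ Nset I :=
    ⟨fun i _ => le_refl 0, fun i _ => rfl⟩
  have hmem : ((((C - Aadj A y) * (α • vecMulVec v v)).trace
      + ⟪b - (0 : EuclideanSpace ℝ (Fin m)), y⟫ : ℝ) : EReal)
      ∈ {r : EReal | ∃ X ∈ SpecSet α Xb V, ∃ ν ∈ Nset I,
          r = ((((C - Aadj A y) * X).trace + ⟪b - ν, y⟫ : ℝ) : EReal)} :=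
    ⟨α • vecMulVec v v, hXmem, 0, h0N, rfl⟩
  refine le_trans (le_of_eq ?_) (le_sSup hmem)
  rw [fpen, if_pos hytilde, ← EReal.coe_add, EReal.coe_eq_coe_iff]
  rw [hmax]
  exact key_identity C A b α ytilde v y g hg
end

section
/- Let X̄ ∈ Sⁿ with X̄ ⪰ 0, let V ∈ ℝ^{n×k} have orthonormal columns, let η ≥ 0 and S ∈ S^k with S ⪰ 0 satisfy η·tr(X̄) + tr(S) ≤ α, and suppose S = Q_p Λ_p Q_pᵀ + Q_c Λ_c Q_cᵀ where Q_p ∈ ℝ^{k×k_p} and Q_c ∈ ℝ^{k×k_c} satisfy Q_pᵀQ_p = I, Q_cᵀQ_c = I, Q_pᵀQ_c = 0, and Λ_p, Λ_c are diagonal with nonnegative entries. Set X₊ = η·X̄ + V S Vᵀ and X̄₊ = η·X̄ + V Q_c Λ_c Q_cᵀ Vᵀ, and let V₊ ∈ ℝ^{n×k'} have orthonormal columns whose span contains every column of V Q_p. Then X₊ belongs to the spectral set X̂₊ = {η'·X̄₊ + V₊ S' V₊ᵀ : η' ≥ 0, S' ⪰ 0, η'·tr(X̄₊) + tr(S') ≤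 α}; consequently, for every ν ∈ N, every ỹ ∈ ℝᵐ, and every y ∈ ℝᵐ, the model f̂₊(y) = sup over (X,ν') ∈ X̂₊ × N of ⟨C − 𝒜*y, X⟩ + ⟨b − ν', y⟩ satisfies f̂₊(y) ≥ ⟨C − 𝒜*ỹ, X₊⟩ + ⟨b − ν, ỹ⟩ + ⟨b − ν − 𝒜X₊, y − ỹ⟩. -/
open Matrix
open scoped RealInnerProductSpace

/-- the updated spectral set still contains `X₊`, and the updated model
satisfies the model-subgradient lower bound. -/
theorem stmt10 {n m k k' kp kc : ℕ} (hn : 0 < n) (hm : 0 < m) (hk : 0 < k) (hk' : 0 < k')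
    (C : Matrix (Fin n) (Fin n) ℝ) (A : Fin m → Matrix (Fin n) (Fin n) ℝ)
    (b : EuclideanSpace ℝ (Fin m)) (I : Finset (Fin m)) (α : ℝ) (hα : 0 < α)
    (Xb : Matrix (Fin n) (Fin n) ℝ) (hXb : Xb.PosSemidef)
    (V : Matrix (Fin n) (Fin k) ℝ) (hV : Vᵀ * V = 1)
    (η : ℝ) (hη : 0 ≤ η)
    (S : Matrix (Fin k) (Fin k) ℝ) (hS : S.PosSemidef)
    (htr : η * Xb.trace + S.trace ≤ α)
    (Qp : Matrix (Fin k) (Fin kp) ℝ) (Qc : Matrix (Fin k) (Fin kc) ℝ)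
    (dp : Fin kp → ℝ) (dc : Fin kc → ℝ)
    (hdp : ∀ i, 0 ≤ dp i) (hdc : ∀ i, 0 ≤ dc i)
    (hQp : Qpᵀ * Qp = 1) (hQc : Qcᵀ * Qc = 1) (hQpc : Qpᵀ * Qc = 0)
    (hSdec : S = Qp * diagonal dp * Qpᵀ + Qc * diagonal dc * Qcᵀ)
    (Xplus Xbplus : Matrix (Fin n) (Fin n) ℝ)
    (hXplus : Xplus = η • Xb + V * S * Vᵀ)
    (hXbplus : Xbplus = η • Xb + V * (Qc * diagonal dc * Qcᵀ) * Vᵀ)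
    (Vplus : Matrix (Fin n) (Fin k') ℝ) (hVplus : Vplusᵀ * Vplus = 1)
    (hspan : ∀ j : Fin kp, ∃ w : Fin k' → ℝ, Vplus.mulVec w = fun i => (V * Qp) i j) :
    Xplus ∈ SpecSet α Xbplus Vplus ∧
    ∀ ν ∈ Nset I, ∀ ytilde y : EuclideanSpace ℝ (Fin m),
      ((((C - Aadj A ytilde) * Xplus).trace + ⟪b - ν, ytilde⟫
          + ⟪b - ν - Aop A Xplus, y - ytilde⟫ : ℝ) : EReal)
        ≤ modelF C A b I α Xbplus Vplus y := by
  classical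
  -- W : columns of V*Qp expressed in the Vplus basis
  set W : Matrix (Fin k') (Fin kp) ℝ :=
    Matrix.of (fun i j => Classical.choose (hspan j) i) with hW
  have hVW : Vplus * W = V * Qp := by
    ext a j
    have := congrFun (Classical.choose_spec (hspan j)) a
    simpa [Matrix.mul_apply, Matrix.mulVec, dotProduct, hW] using this
  have hWW : Wᵀ * W = 1 := by
    have h1 : (Vplus * W)ᵀ * (Vplus * W) = Wᵀ * W := by
      rw [Matrix.transpose_mul]
      calc Wᵀ * Vplusᵀ * (Vplus * W) = Wᵀ * (Vplusᵀ * Vplus) * W := by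
            simp [Matrix.mul_assoc]
        _ = Wᵀ * W := by rw [hVplus, Matrix.mul_one]
    have h2 : (V * Qp)ᵀ * (V * Qp) = 1 := by
      rw [Matrix.transpose_mul]
      calc Qpᵀ * Vᵀ * (V * Qp) = Qpᵀ * (Vᵀ * V) * Qp := by simp [Matrix.mul_assoc]
        _ = 1 := by rw [hV, Matrix.mul_one, hQp]
    rw [← h1, hVW, h2]
  set Sp : Matrix (Fin k') (Fin k') ℝ := W * diagonal dp * Wᵀ with hSp
  have hWH : Wᴴ = Wᵀ := by ext i j; simp [Matrix.conjTranspose_apply]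
  have hSpPSD : Sp.PosSemidef := by
    have hd : (diagonal dp).PosSemidef := Matrix.posSemidef_diagonal_iff.mpr hdp
    have := hd.mul_mul_conjTranspose_same W
    rwa [hWH] at this
  have htrSp : Sp.trace = (diagonal dp).trace := by
    rw [hSp, Matrix.trace_mul_cycle, hWW, Matrix.one_mul]
  have htrS : S.trace = (diagonal dp).trace + (diagonal dc).trace := by
    rw [hSdec, Matrix.trace_add]
    congr 1
    · rw [Matrix.trace_mul_cycle, hQp, Matrix.one_mul]
    · rw [Matrix.trace_mul_cycle, hQc, Matrix.one_mul]
  have htrVMV : ∀ {l : ℕ} (M : Matrix (Fin l) (Fin l) ℝ) (U : Matrix (Fin n) (Fin l) ℝ),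
      Uᵀ * U = 1 → (U * M * Uᵀ).trace = M.trace := by
    intro l M U hU
    rw [Matrix.trace_mul_cycle, hU, Matrix.one_mul]
  have htrXbplus : Xbplus.trace = η * Xb.trace + (diagonal dc).trace := by
    rw [hXbplus, Matrix.trace_add, Matrix.trace_smul, smul_eq_mul]
    congr 1
    rw [htrVMV _ V hV, Matrix.trace_mul_cycle, hQc, Matrix.one_mul]
  have hmem : Xplus ∈ SpecSet α Xbplus Vplus := by
    refine ⟨1, Sp, zero_le_one, hSpPSD, ?_, ?_⟩
    · rw [htrXbplus, htrSp, one_mul]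
      calc η * Xb.trace + (diagonal dc).trace + (diagonal dp).trace
          = η * Xb.trace + S.trace := by rw [htrS]; ring
        _ ≤ α := htr
    · have hVpSp : Vplus * Sp * Vplusᵀ = V * (Qp * diagonal dp * Qpᵀ) * Vᵀ := by
        calc Vplus * Sp * Vplusᵀ = (Vplus * W) * diagonal dp * (Vplus * W)ᵀ := by
              rw [Matrix.transpose_mul]; simp [hSp, Matrix.mul_assoc]
          _ = (V * Qp) * diagonal dp * (V * Qp)ᵀ := by rw [hVW]
          _ = V * (Qp * diagonal dp * Qpᵀ) * Vᵀ := by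
              rw [Matrix.transpose_mul]; simp [Matrix.mul_assoc]
      rw [one_smul, hVpSp, hXbplus, hXplus, hSdec]
      rw [Matrix.mul_add, Matrix.add_mul]
      abel
  refine ⟨hmem, ?_⟩
  intro ν hν ytilde y
  -- the key algebraic identity
  have tkey : ∀ u : EuclideanSpace ℝ (Fin m),
      ((C - Aadj A u) * Xplus).trace
        = (C * Xplus).trace - ∑ i, u i * (A i * Xplus).trace := by
    intro u
    simp [Aadj, Matrix.sub_mul, Matrix.sum_mul, Matrix.smul_mul, Matrix.trace_sum,
      Finset.mul_sum]
  have ikey : ∀ u v : EuclideanSpace ℝ (Fin m), ⟪u, v⟫ = ∑ i, u i * v i := by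
    intro u v; simp [PiLp.inner_apply, RCLike.inner_apply, mul_comm]
  have hreal : (((C - Aadj A ytilde) * Xplus).trace + ⟪b - ν, ytilde⟫
          + ⟪b - ν - Aop A Xplus, y - ytilde⟫ : ℝ)
      = (((C - Aadj A y) * Xplus).trace + ⟪b - ν, y⟫ : ℝ) := by
    rw [tkey, tkey, ikey, ikey, ikey]
    have hE : ∑ i, (b - ν - Aop A Xplus) i * (y - ytilde) i
        = (∑ i, (b - ν) i * y i) - (∑ i, (b - ν) i * ytilde i)
          - (∑ i, y i * (A i * Xplus).trace) + (∑ i, ytilde i * (A i * Xplus).trace) := by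
      rw [← Finset.sum_sub_distrib, ← Finset.sum_sub_distrib, ← Finset.sum_add_distrib]
      apply Finset.sum_congr rfl
      intro i _
      simp only [PiLp.sub_apply, Aop, PiLp.toLp_apply]
      ring
    rw [hE]
    ring
  rw [hreal]
  apply le_sSup
  exact ⟨Xplus, hmem, ν, hν, rfl⟩
end

section
/- Fix ρ > 0, let y_t ∈ Y, and let X ∈ Sⁿ. Let ν = proj_N(b − 𝒜X − ρ·y_t) and ỹ = y_t − (1/ρ)(b − ν − 𝒜X). Then ‖𝒜X − proj_K(𝒜X)‖ ≤ ρ·‖y_t − ỹ‖. -/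
open Matrix
open scoped RealInnerProductSpace

/-- Euclidean projection onto `K`: `proj_K(z)ᵢ = min{zᵢ, bᵢ}` for `i ∈ I`, `bᵢ` for `i ∉ I`. -/
noncomputable def projK {m : ℕ} (I : Finset (Fin m)) (b : EuclideanSpace ℝ (Fin m))
    (z : EuclideanSpace ℝ (Fin m)) : EuclideanSpace ℝ (Fin m) :=
  WithLp.toLp 2 (fun i => if i ∈ I then min (z i) (b i) else b i)

/-- with `ν = proj_N(b − 𝒜X − ρ·y_t)` and `ỹ = y_t − (1/ρ)(b − ν − 𝒜X)`,
one has `‖𝒜X − proj_K(𝒜X)‖ ≤ ρ·‖y_t − ỹ‖`. -/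
theorem stmt12 {n m : ℕ} (A : Fin m → Matrix (Fin n) (Fin n) ℝ)
    (b : EuclideanSpace ℝ (Fin m)) (I : Finset (Fin m))
    (ρ : ℝ) (hρ : 0 < ρ)
    (yt : EuclideanSpace ℝ (Fin m)) (hyt : yt ∈ Yset I)
    (X : Matrix (Fin n) (Fin n) ℝ)
    (ν ytilde : EuclideanSpace ℝ (Fin m))
    (hν : ν = projN I (b - Aop A X - ρ • yt))
    (hyt' : ytilde = yt - (1 / ρ) • (b - ν - Aop A X)) :
    ‖Aop A X - projK I b (Aop A X)‖ ≤ ρ * ‖yt - ytilde‖ := by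
  have hρ' : ρ ≠ 0 := hρ.ne'
  set z := Aop A X with hz
  have key : ρ • (yt - ytilde) = b - ν - z := by
    rw [hyt']
    rw [sub_sub_cancel, smul_smul]
    rw [mul_one_div, div_self hρ', one_smul]
  have hnorm : ρ * ‖yt - ytilde‖ = ‖b - ν - z‖ := by
    rw [← key, norm_smul, Real.norm_eq_abs, abs_of_pos hρ]
  rw [hnorm]
  -- pointwise bound
  have hpt : ∀ i, |(z - projK I b z) i| ≤ |(b - ν - z) i| := by
    intro i
    have hsub : (z - projK I b z) i = z i - projK I b z i := rfl
    have hsub2 : (b - ν - z) i = b i - ν i - z i := rfl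
    rw [hsub, hsub2, hν]
    by_cases hi : i ∈ I
    · have hν' : projN I (b - z - ρ • yt) i = max (b i - z i - ρ * yt i) 0 := by
        simp [projN, hi]
      rw [hν']
      simp only [projK, hi, if_pos]
      by_cases hle : z i ≤ b i
      · rw [min_eq_left hle]
        simp
      · push_neg at hle
        rw [min_eq_right hle.le]
        have hy : 0 ≤ yt i := hyt i hi
        have : max (b i - z i - ρ * yt i) 0 = 0 := by
          apply max_eq_right
          nlinarith
        rw [this]
        rw [abs_of_pos (by linarith), abs_of_nonpos (by linarith)]
        linarith
    · have hν' : projN I (b - z - ρ • yt) i = 0 := by simp [projN, hi]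
      rw [hν']
      simp only [projK, hi, if_neg, ite_false]
      rw [abs_sub_comm]
      simp
  have h1 := EuclideanSpace.norm_eq (z - projK I b z)
  have h2 := EuclideanSpace.norm_eq (b - ν - z)
  rw [h1, h2]
  apply Real.sqrt_le_sqrt
  apply Finset.sum_le_sum
  intro i _
  simp only [Real.norm_eq_abs]
  exact pow_le_pow_left₀ (abs_nonneg _) (hpt i) 2
end

section
/- Fix ρ > 0 and β ∈ (0,1). Let y_t ∈ Y with f(y_t) < +∞, let y⋆ be a minimizer of f over ℝᵐ, and let X ∈ Sⁿ. Let ν = proj_N(b − 𝒜X − ρ·y_t) and ỹ = y_t − (1/ρ)(b − ν − 𝒜X). Suppose f̂ : ℝᵐ → (−∞,+∞] satisfies f̂ ≤ f pointwise, ỹ is a minimizer of y ↦ f̂(y) + (ρ/2)‖y − y_t‖² with f̂(ỹ) finite, and the descent condition β·(f(y_t) − f̂(ỹ)) ≤ f(y_t) − f(ỹ) holds. Then dist(𝒜X, K)² ≤ (2ρ/β)·(f(y_t) − f(y⋆)). -/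
open Matrix
open scoped RealInnerProductSpace

def Kset {m : ℕ} (I : Finset (Fin m)) (b : EuclideanSpace ℝ (Fin m)) :
    Set (EuclideanSpace ℝ (Fin m)) :=
  {z | (∀ i ∈ I, z i ≤ b i) ∧ ∀ i ∉ I, z i = b i}

/-- at a descent step, `dist(𝒜X, K)² ≤ (2ρ/β)·(f(y_t) − f(y⋆))`. -/
theorem stmt13 {n m : ℕ} (hn : 0 < n) (hm : 0 < m)
    (C : Matrix (Fin n) (Fin n) ℝ) (A : Fin m → Matrix (Fin n) (Fin n) ℝ)
    (b : EuclideanSpace ℝ (Fin m)) (I : Finset (Fin m)) (α : ℝ) (hα : 0 < α)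
    (ρ β : ℝ) (hρ : 0 < ρ) (hβ0 : 0 < β) (hβ1 : β < 1)
    (yt : EuclideanSpace ℝ (Fin m)) (hyt : yt ∈ Yset I)
    (hytfin : fpen C A b I α yt ≠ ⊤)
    (ystar : EuclideanSpace ℝ (Fin m))
    (hystar : ∀ y, fpen C A b I α ystar ≤ fpen C A b I α y)
    (X : Matrix (Fin n) (Fin n) ℝ)
    (ν ytilde : EuclideanSpace ℝ (Fin m))
    (hν : ν = projN I (b - Aop A X - ρ • yt))
    (hyt' : ytilde = yt - (1 / ρ) • (b - ν - Aop A X))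
    (fhat : EuclideanSpace ℝ (Fin m) → EReal)
    (hfhat : ∀ y, fhat y ≤ fpen C A b I α y)
    (htildefin : fhat ytilde ≠ ⊤ ∧ fhat ytilde ≠ ⊥)
    (hmin : ∀ y, fhat ytilde + (((ρ / 2) * ‖ytilde - yt‖ ^ 2 : ℝ) : EReal)
        ≤ fhat y + (((ρ / 2) * ‖y - yt‖ ^ 2 : ℝ) : EReal))
    (hdesc : (β : EReal) * (fpen C A b I α yt - fhat ytilde)
        ≤ fpen C A b I α yt - fpen C A b I α ytilde) :
    (((Metric.infDist (Aop A X) (Kset I b)) ^ 2 : ℝ) : EReal)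
      ≤ ((2 * ρ / β : ℝ) : EReal) * (fpen C A b I α yt - fpen C A b I α ystar) := by

  classical
  -- extract real values
  have hcases : ∀ y, (fpen C A b I α y = ⊤) ∨ ∃ r : ℝ, fpen C A b I α y = (r : EReal) := by
    intro y; unfold fpen; split
    · exact Or.inr ⟨_, rfl⟩
    · exact Or.inl rfl
  obtain ⟨ft, hft⟩ : ∃ r : ℝ, fpen C A b I α yt = (r : EReal) :=
    (hcases yt).resolve_left hytfin
  obtain ⟨fh, hfh⟩ : ∃ r : ℝ, fhat ytilde = (r : EReal) :=
    ⟨(fhat ytilde).toReal, (EReal.coe_toReal htildefin.1 htildefin.2).symm⟩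
  obtain ⟨fs, hfs⟩ : ∃ r : ℝ, fpen C A b I α ystar = (r : EReal) := by
    refine (hcases ystar).resolve_left ?_
    intro h
    have := hystar yt
    rw [h, hft] at this
    exact (not_le.mpr (EReal.coe_lt_top ft)) this
  obtain ⟨fy, hfy⟩ : ∃ r : ℝ, fpen C A b I α ytilde = (r : EReal) := by
    refine (hcases ytilde).resolve_left ?_
    intro h
    rw [h, hft, hfh] at hdesc
    rw [show (ft : EReal) - (⊤ : EReal) = ⊥ from EReal.sub_top _] at hdesc
    rw [← EReal.coe_sub, ← EReal.coe_mul, le_bot_iff] at hdesc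
    exact EReal.coe_ne_bot _ hdesc
  -- real versions of the hypotheses
  have hdescR : β * (ft - fh) ≤ ft - fy := by
    rw [hft, hfh, hfy, ← EReal.coe_sub, ← EReal.coe_sub, ← EReal.coe_mul] at hdesc
    exact EReal.coe_le_coe_iff.mp hdesc
  have hstarR : fs ≤ fy := by
    have := hystar ytilde
    rw [hfs, hfy] at this
    exact EReal.coe_le_coe_iff.mp this
  have hminR : fh + (ρ / 2) * ‖ytilde - yt‖ ^ 2 ≤ ft := by
    have h1 := hmin yt
    have h2 : fhat yt + (((ρ / 2) * ‖yt - yt‖ ^ 2 : ℝ) : EReal)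
        ≤ (ft : EReal) + (((ρ / 2) * ‖yt - yt‖ ^ 2 : ℝ) : EReal) :=
      add_le_add (by rw [← hft]; exact hfhat yt) le_rfl
    have h3 := le_trans h1 h2
    rw [hfh, ← EReal.coe_add, ← EReal.coe_add, sub_self, norm_zero] at h3
    have h4 := EReal.coe_le_coe_iff.mp h3
    simpa using h4
  -- geometry: b - ν ∈ K
  have hmem : b - ν ∈ Kset I b := by
    constructor
    · intro i hi
      have hνi : ν i = max ((b - Aop A X - ρ • yt) i) 0 := by simp [hν, projN, hi]
      have : (b - ν) i = b i - ν i := by simp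
      rw [this, hνi]
      simp [le_max_right]
    · intro i hi
      have hνi : ν i = 0 := by simp [hν, projN, hi]
      have : (b - ν) i = b i - ν i := by simp
      rw [this, hνi, sub_zero]
  -- norm identity
  have hsub : ytilde - yt = -((1 / ρ) • (b - ν - Aop A X)) := by
    rw [hyt']; abel
  have hwnorm : ‖b - ν - Aop A X‖ = ρ * ‖ytilde - yt‖ := by
    rw [hsub, norm_neg, norm_smul, Real.norm_eq_abs, abs_of_pos (by positivity : (0:ℝ) < 1/ρ)]
    field_simp
  have hdistle : Metric.infDist (Aop A X) (Kset I b) ≤ ρ * ‖ytilde - yt‖ := by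
    calc Metric.infDist (Aop A X) (Kset I b) ≤ dist (Aop A X) (b - ν) :=
          Metric.infDist_le_dist_of_mem hmem
      _ = ‖b - ν - Aop A X‖ := by rw [dist_eq_norm, ← norm_neg]; congr 1; abel
      _ = ρ * ‖ytilde - yt‖ := hwnorm
  have hd0 : 0 ≤ Metric.infDist (Aop A X) (Kset I b) := Metric.infDist_nonneg
  set d := Metric.infDist (Aop A X) (Kset I b)
  set s := ‖ytilde - yt‖
  have hs0 : 0 ≤ s := norm_nonneg _
  -- real inequality chain
  have hfinal : d ^ 2 ≤ (2 * ρ / β) * (ft - fs) := by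
    have h1 : d ^ 2 ≤ ρ ^ 2 * s ^ 2 := by nlinarith
    have h2 : ρ ^ 2 * s ^ 2 ≤ 2 * ρ * (ft - fh) := by nlinarith
    have h3 : β * (ft - fh) ≤ ft - fs := by linarith
    have h4 : ft - fh ≤ (ft - fs) / β := by
      rw [le_div_iff₀ hβ0]; linarith [h3]
    calc d ^ 2 ≤ 2 * ρ * (ft - fh) := le_trans h1 h2
      _ ≤ 2 * ρ * ((ft - fs) / β) := by
          apply mul_le_mul_of_nonneg_left h4 (by positivity)
      _ = (2 * ρ / β) * (ft - fs) := by ring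
  rw [hft, hfs, ← EReal.coe_sub, ← EReal.coe_mul]
  exact EReal.coe_le_coe_iff.mpr hfinal
end
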